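/- Let ρ : (0,1] → ℝ be a nonnegative measurable function such that r ↦ r³ρ(r) and r ↦ r ρ(r) are integrable on (0,1), and suppose there is r* ∈ (0,1] such that the map r ↦ r ρ(r) is nondecreasing on (0, r*] (Case II). Then for every δ > 0 and every k ∈ ℤ² \ {0} with δ|k| ≥ π, one has δ² λ_δ(k) ≥ min{ 4 (arccos(1/3) − π/3) ∫₀^{r*} r ρ(r) (1 − cos r) dr , π ∫_{r*/√2}^{r*} r ρ(r) dr , π ∫₀^{(3/7)r*} r ρ(r) dr }. -/

import Mathlib

open Real MeasureTheory

-- cos x ≤ cos r for r ≤ x ≤ 2π − r, 0 ≤ r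
lemma cos_between {r x : ℝ} (hr : 0 ≤ r) (h1 : r ≤ x) (h2 : x ≤ 2*π - r) :
    Real.cos x ≤ Real.cos r := by
  rcases le_or_gt x π with h | h
  · exact Real.cos_le_cos_of_nonneg_of_le_pi hr h h1
  · have : Real.cos x = Real.cos (2*π - x) := by
      rw [Real.cos_sub, Real.cos_two_pi, Real.sin_two_pi]; ring
    rw [this]
    exact Real.cos_le_cos_of_nonneg_of_le_pi hr (by linarith) (by linarith)

-- constant C bounds
lemma constC_nonneg : 0 ≤ Real.arccos (1/3) - π/3 := by
  have h1 : Real.arcsin (1/3) ≤ Real.arcsin (1/2) := Real.monotone_arcsin (by norm_num)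
  have h2 : Real.arcsin (1/2) = π/6 := by
    rw [show (1/2:ℝ) = Real.sin (π/6) by rw [Real.sin_pi_div_six]]
    exact Real.arcsin_sin (by linarith [Real.pi_pos]) (by linarith [Real.pi_pos])
  rw [Real.arccos_eq_pi_div_two_sub_arcsin]
  linarith

lemma constC_le : Real.arccos (1/3) - π/3 ≤ π/6 - 1/3 := by
  have h0 : (0:ℝ) ≤ Real.arcsin (1/3) := Real.arcsin_nonneg.2 (by norm_num)
  have h1 : Real.sin (Real.arcsin (1/3)) = 1/3 := Real.sin_arcsin (by norm_num) (by norm_num)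
  have h2 : Real.sin (Real.arcsin (1/3)) ≤ Real.arcsin (1/3) := Real.sin_le h0
  rw [Real.arccos_eq_pi_div_two_sub_arcsin]
  linarith

lemma periodize (g : ℝ → ℝ) (T ω : ℝ) (hω : 0 < ω) (hg00 : g 0 = 0)
    (hg0 : ∀ r ∈ Set.Ioc (0:ℝ) T, 0 ≤ g r) (hgm : MonotoneOn g (Set.Ioc (0:ℝ) T))
    (hgi : IntervalIntegrable g volume 0 T)
    (hgi2 : IntervalIntegrable (fun r => g r * (1 - Real.cos (r*ω))) volume 0 T) :
    ∀ n : ℕ, ∀ u, 0 ≤ u → u ≤ n * (2*π/ω) → u + 2*π/ω ≤ T →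
      ∫ r in (0:ℝ)..u, g r ≤ ∫ r in (0:ℝ)..(u + 2*π/ω), g r * (1 - Real.cos (r*ω)) := by
  set p := 2*π/ω with hpdef
  have hp : 0 < p := by positivity
  have hsub : ∀ {f : ℝ → ℝ}, IntervalIntegrable f volume 0 T → ∀ {a b : ℝ},
      0 ≤ a → a ≤ b → b ≤ T → IntervalIntegrable f volume a b := by
    intro f hf a b ha hab hb
    refine hf.mono_set ?_
    rw [Set.uIcc_of_le hab, Set.uIcc_of_le (by linarith)]
    exact Set.Icc_subset_Icc ha hb
  -- the integrand is nonneg on subintervals of [0, T]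
  have hnn : ∀ a b : ℝ, 0 ≤ a → b ≤ T → a ≤ b →
      0 ≤ ∫ r in a..b, g r * (1 - Real.cos (r*ω)) := by
    intro a b ha hb hab
    refine intervalIntegral.integral_nonneg hab fun r hr => ?_
    rcases eq_or_lt_of_le (le_trans ha hr.1) with h0 | h0
    · rw [← h0, hg00]; ring_nf; simp
    · have := hg0 r ⟨h0, le_trans hr.2 hb⟩
      have hc := Real.cos_le_one (r*ω)
      nlinarith
  -- one full period
  have hperiod : ∀ u : ℝ, 0 < u → u + p ≤ T →
      p * g u ≤ ∫ r in u..(u+p), g r * (1 - Real.cos (r*ω)) := by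
    intro u hu huT
    have hpω : p * ω = 2*π := by rw [hpdef]; exact div_mul_cancel₀ _ hω.ne'
    have Icos : (∫ r in u..(u+p), Real.cos (r*ω)) = 0 := by
      rw [intervalIntegral.integral_comp_mul_right Real.cos hω.ne']
      rw [integral_cos]
      have : (u+p)*ω = u*ω + 2*π := by rw [add_mul, hpω]
      rw [this, Real.sin_add_two_pi]
      simp
    have Ione : (∫ r in u..(u+p), (1 - Real.cos (r*ω))) = p := by
      have hcont : Continuous fun r : ℝ => Real.cos (r*ω) := by fun_prop
      rw [intervalIntegral.integral_sub intervalIntegrable_const (hcont.intervalIntegrable u (u+p)),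
        Icos, intervalIntegral.integral_const]
      simp
    have hconst : (∫ r in u..(u+p), g u * (1 - Real.cos (r*ω))) = g u * p := by
      rw [intervalIntegral.integral_const_mul, Ione]
    have hmono : (∫ r in u..(u+p), g u * (1 - Real.cos (r*ω)))
        ≤ ∫ r in u..(u+p), g r * (1 - Real.cos (r*ω)) := by
      refine intervalIntegral.integral_mono_on (by linarith)
        ((continuous_const.mul (by fun_prop : Continuous fun r : ℝ => 1 - Real.cos (r*ω))).intervalIntegrable u (u+p))
        (hsub hgi2 (le_of_lt hu) (by linarith) huT) fun r hr => ?_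
      have hgu : g u ≤ g r := hgm ⟨hu, by linarith [hr.1, hr.2]⟩
        ⟨lt_of_lt_of_le hu hr.1, by linarith [hr.2]⟩ hr.1
      have hc := Real.cos_le_one (r*ω)
      nlinarith
    calc p * g u = g u * p := by ring
    _ = _ := hconst.symm
    _ ≤ _ := hmono
  intro n
  induction n with
  | zero =>
    intro u hu0 hun hT'
    have hu : u = 0 := le_antisymm (by simpa using hun) hu0
    subst hu
    rw [intervalIntegral.integral_same]
    exact hnn 0 (0 + p) le_rfl hT' (by linarith)
  | succ n ih =>
    intro u hu0 hun hT'
    rcases le_or_gt u ((n:ℝ) * p) with h | h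
    · exact ih u hu0 h hT'
    · have hu : 0 < u := lt_of_le_of_lt (by positivity) h
      have huT : u ≤ T := by linarith
      have hgu : 0 ≤ g u := hg0 u ⟨hu, huT⟩
      have hsplit : (∫ r in (0:ℝ)..u, g r * (1 - Real.cos (r*ω)))
          + (∫ r in u..(u+p), g r * (1 - Real.cos (r*ω)))
          = ∫ r in (0:ℝ)..(u+p), g r * (1 - Real.cos (r*ω)) :=
        intervalIntegral.integral_add_adjacent_intervals
          (hsub hgi2 le_rfl (le_of_lt hu) huT) (hsub hgi2 (le_of_lt hu) (by linarith) hT')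
      rcases le_or_gt u p with hup | hup
      · -- ∫₀ᵘ g ≤ u g(u) ≤ p g(u)
        have h1 : (∫ r in (0:ℝ)..u, g r) ≤ ∫ r in (0:ℝ)..u, g u := by
          refine intervalIntegral.integral_mono_on hu0
            (hsub hgi le_rfl hu0 huT) intervalIntegrable_const fun r hr => ?_
          rcases eq_or_lt_of_le hr.1 with h0 | h0
          · rw [← h0, hg00]; exact hgu
          · exact hgm ⟨h0, le_trans hr.2 huT⟩ ⟨hu, huT⟩ hr.2
        have h2 : (∫ r in (0:ℝ)..u, g u) = u * g u := by
          rw [intervalIntegral.integral_const, smul_eq_mul]; ring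
        have h3 := hperiod u hu hT'
        have h4 := hnn 0 u le_rfl huT hu0
        nlinarith [mul_le_mul_of_nonneg_right hup hgu]
      · -- use IH at u − p
        have h1 := ih (u - p) (by linarith) (by push_cast at hun ⊢; linarith) (by linarith)
        rw [sub_add_cancel] at h1
        have h2 : (∫ r in (u-p)..u, g r) ≤ ∫ r in (u-p)..u, g u := by
          refine intervalIntegral.integral_mono_on (by linarith)
            (hsub hgi (by linarith) (by linarith) huT) intervalIntegrable_const fun r hr => ?_
          exact hgm ⟨by linarith [hr.1], le_trans hr.2 huT⟩ ⟨hu, huT⟩ hr.2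
        have h3 : (∫ r in (u-p)..u, g u) = p * g u := by
          rw [intervalIntegral.integral_const, smul_eq_mul]; ring
        have h4 : (∫ r in (0:ℝ)..u, g r) = (∫ r in (0:ℝ)..(u-p), g r) + ∫ r in (u-p)..u, g r :=
          (intervalIntegral.integral_add_adjacent_intervals
            (hsub hgi le_rfl (by linarith) (by linarith))
            (hsub hgi (by linarith) (by linarith) huT)).symm
        have h5 := hperiod u hu hT'
        linarith

/-- Euclidean norm of a nonzero integer vector `k ∈ ℤ²`. -/
noncomputable def knorm2 (k : ℤ × ℤ) : ℝ :=
  Real.sqrt ((k.1 : ℝ) ^ 2 + (k.2 : ℝ) ^ 2)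

/-- The 2D Fourier symbol of the nonlocal diffusion operator:
`λ_δ(k) = (4/δ²) ∫₀^{π/2} ∫₀¹ r ρ(r) (1 − cos(r δ |k| cos θ)) dr dθ`. -/
noncomputable def lambdaDelta2 (ρ : ℝ → ℝ) (δ κ : ℝ) : ℝ :=
  (4 / δ ^ 2) * ∫ θ in (0:ℝ)..(π / 2), ∫ r in (0:ℝ)..1,
    r * ρ r * (1 - Real.cos (r * δ * κ * Real.cos θ))

set_option maxHeartbeats 1000000 in
theorem lambdaDelta2_caseII_bound (ρ : ℝ → ℝ) (hmeas : Measurable ρ)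
    (hnonneg : ∀ r ∈ Set.Ioc (0:ℝ) 1, 0 ≤ ρ r)
    (hint3 : IntervalIntegrable (fun r => r ^ 3 * ρ r) volume 0 1)
    (hint1 : IntervalIntegrable (fun r => r * ρ r) volume 0 1)
    (rs : ℝ) (hrs : rs ∈ Set.Ioc (0:ℝ) 1)
    (hmono : MonotoneOn (fun r => r * ρ r) (Set.Ioc (0:ℝ) rs))
    (δ : ℝ) (hδ : 0 < δ) (k : ℤ × ℤ) (hk : k ≠ 0)
    (hlarge : π ≤ δ * knorm2 k) :
    min (4 * (Real.arccos (1 / 3) - π / 3) *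
          (∫ r in (0:ℝ)..rs, r * ρ r * (1 - Real.cos r)))
        (min (π * ∫ r in (rs / Real.sqrt 2)..rs, r * ρ r)
             (π * ∫ r in (0:ℝ)..((3 / 7) * rs), r * ρ r))
      ≤ δ ^ 2 * lambdaDelta2 ρ δ (knorm2 k) := by
  obtain ⟨hrs0, hrs1⟩ := hrs
  set κ := knorm2 k with hκ
  clear_value κ
  set s := δ * κ with hsdef
  have hspos : 0 < s := lt_of_lt_of_le Real.pi_pos hlarge
  have hs3 : (3:ℝ) < s := lt_of_lt_of_le Real.pi_gt_three hlarge
  clear_value s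
  have hC0 : 0 ≤ Real.arccos (1/3) - π/3 := constC_nonneg
  have hCle : Real.arccos (1/3) - π/3 ≤ π/6 - 1/3 := constC_le
  have hsq2 : Real.sqrt 2 ≤ 1.415 := by
    nlinarith [Real.sq_sqrt (show (0:ℝ) ≤ 2 by norm_num), Real.sqrt_nonneg 2]
  have hsq2l : 1.41 ≤ Real.sqrt 2 := by
    nlinarith [Real.sq_sqrt (show (0:ℝ) ≤ 2 by norm_num), Real.sqrt_nonneg 2]
  -- measurability helpers
  have Hm : ∀ c : ℝ, Measurable fun r : ℝ => r * ρ r * (1 - Real.cos (r * c)) := fun c =>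
    (measurable_id.mul hmeas).mul
      (measurable_const.sub (Real.measurable_cos.comp (measurable_id.mul_const c)))
  have Hm2 : ∀ θ : ℝ, Measurable fun r : ℝ => r * ρ r * (1 - Real.cos (r * δ * κ * Real.cos θ)) :=
    fun θ => (measurable_id.mul hmeas).mul (measurable_const.sub (Real.measurable_cos.comp
      (((measurable_id.mul_const δ).mul_const κ).mul_const (Real.cos θ))))
  have Habs : ∀ (r c : ℝ), 0 < r → r ≤ 1 → |r * ρ r * (1 - Real.cos c)| ≤ 2 * (r * ρ r) := by
    intro r c hr0 hr1
    have hρ : 0 ≤ ρ r := hnonneg r ⟨hr0, hr1⟩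
    have h1 := Real.cos_le_one c
    have h2 := Real.neg_one_le_cos c
    rw [abs_mul, abs_of_nonneg (mul_nonneg hr0.le hρ), abs_of_nonneg (by linarith)]
    nlinarith [mul_nonneg hr0.le hρ]
  have Hbound : ∀ f : ℝ → ℝ, Measurable f → (∀ r ∈ Set.Ioc (0:ℝ) 1, |f r| ≤ 2 * (r * ρ r)) →
      IntervalIntegrable f volume 0 1 := by
    intro f hf hb
    refine (hint1.const_mul 2).mono_fun' hf.aestronglyMeasurable ?_
    refine (ae_restrict_mem measurableSet_uIoc).mono fun x hx => ?_
    rw [Set.uIoc_of_le (by norm_num : (0:ℝ) ≤ 1)] at hx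
    show ‖f x‖ ≤ 2 * (x * ρ x)
    rw [Real.norm_eq_abs]
    exact hb x hx
  have HIω : ∀ c : ℝ, IntervalIntegrable (fun r => r * ρ r * (1 - Real.cos (r * c))) volume 0 1 :=
    fun c => Hbound _ (Hm c) fun r hr => Habs r _ hr.1 hr.2
  have HI : ∀ θ : ℝ, IntervalIntegrable
      (fun r => r * ρ r * (1 - Real.cos (r * δ * κ * Real.cos θ))) volume 0 1 :=
    fun θ => Hbound _ (Hm2 θ) fun r hr => Habs r _ hr.1 hr.2
  have HIcosr : IntervalIntegrable (fun r => r * ρ r * (1 - Real.cos r)) volume 0 1 := by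
    refine Hbound _ ((measurable_id.mul hmeas).mul
      (measurable_const.sub Real.measurable_cos)) fun r hr => Habs r _ hr.1 hr.2
  have hsub01 : ∀ {a b : ℝ}, 0 ≤ a → a ≤ b → b ≤ 1 → Set.uIcc a b ⊆ Set.uIcc (0:ℝ) 1 := by
    intro a b ha hab hb
    rw [Set.uIcc_of_le hab, Set.uIcc_of_le (by norm_num : (0:ℝ) ≤ 1)]
    exact Set.Icc_subset_Icc ha hb
  -- the θ-integrand
  set F : ℝ → ℝ := fun θ => ∫ r in (0:ℝ)..1,
    r * ρ r * (1 - Real.cos (r * δ * κ * Real.cos θ)) with hFdef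
  have hFcont : Continuous F := by
    rw [hFdef]
    refine intervalIntegral.continuous_of_dominated_interval
      (bound := fun r => 2 * (r * ρ r)) (fun θ => (Hm2 θ).aestronglyMeasurable) ?_
      (hint1.const_mul 2) ?_
    · intro θ
      refine Filter.Eventually.of_forall fun r hr => ?_
      rw [Set.uIoc_of_le (by norm_num : (0:ℝ) ≤ 1)] at hr
      show ‖r * ρ r * (1 - Real.cos (r * δ * κ * Real.cos θ))‖ ≤ 2 * (r * ρ r)
      rw [Real.norm_eq_abs]
      exact Habs r _ hr.1 hr.2
    · exact Filter.Eventually.of_forall fun r _ => by fun_prop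
  have hFnn : ∀ θ, 0 ≤ F θ := by
    intro θ
    rw [hFdef]
    refine intervalIntegral.integral_nonneg (by norm_num) fun r hr => ?_
    rcases eq_or_lt_of_le hr.1 with h0 | h0
    · rw [← h0]; simp
    · have hρ := hnonneg r ⟨h0, hr.2⟩
      nlinarith [Real.cos_le_one (r * δ * κ * Real.cos θ), mul_nonneg h0.le hρ]
  have hEq : δ ^ 2 * lambdaDelta2 ρ δ κ = 4 * ∫ θ in (0:ℝ)..(π/2), F θ := by
    simp only [lambdaDelta2, hFdef]
    field_simp
    refine intervalIntegral.integral_congr fun θ _ => ?_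
    refine intervalIntegral.integral_congr fun r _ => ?_
    beta_reduce
    ring_nf
  have hFsplit : ∀ θ : ℝ,
      (∫ r in (0:ℝ)..rs, r * ρ r * (1 - Real.cos (r * δ * κ * Real.cos θ))) ≤ F θ := by
    intro θ
    have e := intervalIntegral.integral_add_adjacent_intervals
      ((HI θ).mono_set (hsub01 le_rfl hrs0.le hrs1))
      ((HI θ).mono_set (hsub01 hrs0.le hrs1 le_rfl))
    have n : 0 ≤ ∫ r in rs..1, r * ρ r * (1 - Real.cos (r * δ * κ * Real.cos θ)) := by
      refine intervalIntegral.integral_nonneg hrs1 fun r hr => ?_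
      have hρ := hnonneg r ⟨lt_of_lt_of_le hrs0 hr.1, hr.2⟩
      nlinarith [Real.cos_le_one (r * δ * κ * Real.cos θ),
        mul_nonneg (le_trans hrs0.le hr.1) hρ]
    rw [hFdef]
    simp only
    linarith [e, n]
  clear_value F
  rw [hEq]
  -- window lower bound
  have hwindow : ∀ α β L : ℝ, 0 ≤ α → α ≤ β → β ≤ π/2 →
      (∀ θ ∈ Set.Icc α β, L ≤ F θ) → (β - α) * L ≤ ∫ θ in (0:ℝ)..(π/2), F θ := by
    intro α β L hα hαβ hβ hL
    have e1 := intervalIntegral.integral_add_adjacent_intervals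
      (hFcont.intervalIntegrable (μ := volume) 0 α) (hFcont.intervalIntegrable (μ := volume) α β)
    have e2 := intervalIntegral.integral_add_adjacent_intervals
      ((hFcont.intervalIntegrable (μ := volume) 0 α).trans (hFcont.intervalIntegrable (μ := volume) α β))
      (hFcont.intervalIntegrable (μ := volume) β (π/2))
    have n1 : 0 ≤ ∫ θ in (0:ℝ)..α, F θ :=
      intervalIntegral.integral_nonneg hα fun θ _ => hFnn θ
    have n2 : 0 ≤ ∫ θ in β..(π/2), F θ :=
      intervalIntegral.integral_nonneg hβ fun θ _ => hFnn θ
    have n3 : (β - α) * L ≤ ∫ θ in α..β, F θ := by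
      have := intervalIntegral.integral_mono_on hαβ (intervalIntegrable_const (c := L))
        (hFcont.intervalIntegrable (μ := volume) α β) hL
      rwa [intervalIntegral.integral_const, smul_eq_mul] at this
    linarith
  rcases le_or_gt s (7 * Real.sqrt 2 * π / (2*rs)) with hcase | hcase
  · -- Case A : moderate s, first bound applies
    have hs1 : 1/s ≤ 1/3 := by
      rw [div_le_div_iff₀ hspos (by norm_num)]; linarith
    have hs0 : 0 < 1/s := by positivity
    set β := Real.arccos (1/s) with hβdef
    have hcosβ : Real.cos β = 1/s := by
      rw [hβdef]; exact Real.cos_arccos (by linarith) (by linarith)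
    have hβπ2 : β ≤ π/2 := by rw [hβdef]; exact Real.arccos_le_pi_div_two.2 hs0.le
    have hβge : Real.arccos (1/3) ≤ β := by
      rw [hβdef, Real.arccos_eq_pi_div_two_sub_arcsin, Real.arccos_eq_pi_div_two_sub_arcsin]
      have := Real.monotone_arcsin hs1
      linarith
    clear_value β
    set C := Real.arccos (1/3) - π/3 with hCdef
    have hβC : π/3 ≤ β - C := by rw [hCdef]; linarith [hβge]
    clear_value C
    have hrsC : rs * s ≤ 7 * Real.sqrt 2 * π / 2 := by
      rw [le_div_iff₀ (by positivity : (0:ℝ) < 2*rs)] at hcase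
      nlinarith
    set L := ∫ r in (0:ℝ)..rs, r * ρ r * (1 - Real.cos r) with hLdef
    have hLint : IntervalIntegrable (fun r => r * ρ r * (1 - Real.cos r)) volume 0 rs :=
      HIcosr.mono_set (hsub01 le_rfl hrs0.le hrs1)
    clear_value L
    have hLF : ∀ θ ∈ Set.Icc (β - C) β, L ≤ F θ := by
      intro θ hθ
      have hθ0 : 0 ≤ θ := le_trans (by linarith [Real.pi_pos]) hθ.1
      have hθπ : θ ≤ π := le_trans (le_trans hθ.2 hβπ2) (by linarith [Real.pi_pos])
      have hcos1 : 1/s ≤ Real.cos θ := by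
        rw [← hcosβ]
        exact Real.cos_le_cos_of_nonneg_of_le_pi hθ0 (by linarith [Real.pi_pos]) hθ.2
      have hcos2 : Real.cos θ ≤ Real.cos (β - C) :=
        Real.cos_le_cos_of_nonneg_of_le_pi (by linarith [Real.pi_pos]) hθπ hθ.1
      have hCπ : C ≤ π := by linarith [Real.pi_gt_three]
      have hcosbc : Real.cos (β - C) ≤ 1/s + C := by
        have t1 : 1/s * Real.cos C ≤ 1/s * 1 :=
          mul_le_mul_of_nonneg_left (Real.cos_le_one C) hs0.le
        have t2 : Real.sin β * Real.sin C ≤ 1 * Real.sin C :=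
          mul_le_mul_of_nonneg_right (Real.sin_le_one β)
            (Real.sin_nonneg_of_nonneg_of_le_pi hC0 hCπ)
        have t3 : Real.sin C ≤ C := Real.sin_le hC0
        rw [Real.cos_sub, hcosβ]
        linarith
      have hsc1 : 1 ≤ s * Real.cos θ := by
        have h := mul_le_mul_of_nonneg_left hcos1 hspos.le
        rw [mul_one_div, div_self hspos.ne'] at h
        exact h
      have hsc2 : s * Real.cos θ ≤ 1 + s * C := by
        have h := mul_le_mul_of_nonneg_left (le_trans hcos2 hcosbc) hspos.le
        rw [mul_add, mul_one_div, div_self hspos.ne'] at h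
        exact h
      have key : ∀ r ∈ Set.Icc (0:ℝ) rs,
          r * ρ r * (1 - Real.cos r) ≤ r * ρ r * (1 - Real.cos (r * δ * κ * Real.cos θ)) := by
        intro r hr
        rcases eq_or_lt_of_le hr.1 with h0 | h0
        · rw [← h0]; simp
        · have hρ : 0 ≤ ρ r := hnonneg r ⟨h0, le_trans hr.2 hrs1⟩
          have hx : r * δ * κ * Real.cos θ = r * (s * Real.cos θ) := by rw [hsdef]; ring
          have hxr : r ≤ r * (s * Real.cos θ) := by
            nlinarith [mul_le_mul_of_nonneg_left hsc1 h0.le]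
          have hxup : r * (s * Real.cos θ) ≤ 2*π - r := by
            have h1 : r * (s * Real.cos θ) ≤ r * (1 + s * C) :=
              mul_le_mul_of_nonneg_left hsc2 h0.le
            have h1' : r * (1 + s * C) = r + (r * s) * C := by ring
            have h2 : r * s ≤ rs * s := mul_le_mul_of_nonneg_right hr.2 hspos.le
            have h2' : (r * s) * C ≤ (rs * s) * C := mul_le_mul_of_nonneg_right h2 hC0
            have h3 : (rs * s) * C ≤ (7 * Real.sqrt 2 * π / 2) * C :=
              mul_le_mul_of_nonneg_right hrsC hC0
            have h4 : (7 * Real.sqrt 2 * π / 2) * C ≤ (7 * Real.sqrt 2 * π / 2) * (π/6 - 1/3) :=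
              mul_le_mul_of_nonneg_left hCle (by positivity)
            have hA : Real.sqrt 2 * π ≤ 4.46 := by
              nlinarith [Real.pi_lt_d2, Real.pi_pos, hsq2, Real.sqrt_nonneg 2]
            have hAl : 4.42 ≤ Real.sqrt 2 * π := by
              nlinarith [Real.pi_gt_d2, Real.pi_pos, hsq2l, Real.sqrt_nonneg 2]
            have hB : Real.sqrt 2 * π * π ≤ 4.46 * 3.15 := by
              nlinarith [Real.pi_lt_d2, Real.pi_pos, hA]
            have h5 : (7 * Real.sqrt 2 * π / 2) * (π/6 - 1/3) ≤ 2 * π - 2 := by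
              have e : (7 * Real.sqrt 2 * π / 2) * (π/6 - 1/3)
                  = 7/12 * (Real.sqrt 2 * π * π) - 7/6 * (Real.sqrt 2 * π) := by ring
              rw [e]
              linarith [Real.pi_gt_d2]
            have hrle1 : r ≤ 1 := le_trans hr.2 hrs1
            linarith
          have hcc : Real.cos (r * (s * Real.cos θ)) ≤ Real.cos r :=
            cos_between h0.le hxr hxup
          rw [hx]
          nlinarith [mul_nonneg h0.le hρ, hcc]
      have h1 : L ≤ ∫ r in (0:ℝ)..rs, r * ρ r * (1 - Real.cos (r * δ * κ * Real.cos θ)) := by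
        rw [hLdef]
        exact intervalIntegral.integral_mono_on hrs0.le hLint
          ((HI θ).mono_set (hsub01 le_rfl hrs0.le hrs1)) key
      exact le_trans h1 (hFsplit θ)
    have hfinal := hwindow (β - C) β L (by linarith [Real.pi_pos]) (by linarith [Real.pi_pos])
      hβπ2 hLF
    refine le_trans (min_le_left _ _) ?_
    have hbb : (β - (β - C)) = C := by ring
    rw [hbb] at hfinal
    linarith
  · -- Case B : large s, third bound applies
    set L := ∫ r in (0:ℝ)..((3/7) * rs), r * ρ r with hLdef
    have hgi : IntervalIntegrable (fun r => r * ρ r) volume 0 rs :=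
      hint1.mono_set (hsub01 le_rfl hrs0.le hrs1)
    have hLF : ∀ θ ∈ Set.Icc (0:ℝ) (π/4), L ≤ F θ := by
      intro θ hθ
      have hcosθ : Real.sqrt 2 / 2 ≤ Real.cos θ := by
        rw [← Real.cos_pi_div_four]
        exact Real.cos_le_cos_of_nonneg_of_le_pi hθ.1 (by linarith [Real.pi_pos]) hθ.2
      have hcosθ0 : 0 < Real.cos θ := lt_of_lt_of_le (by positivity) hcosθ
      set ω := s * Real.cos θ with hωdef
      have hcase' : 7 * Real.sqrt 2 * π < s * (2*rs) := by
        rw [div_lt_iff₀ (by positivity : (0:ℝ) < 2*rs)] at hcase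
        linarith
      have hω7 : 7 * π ≤ 2 * rs * ω := by
        rw [hωdef]
        have hc1 : (7 * Real.sqrt 2 * π) * Real.cos θ ≤ (s * (2*rs)) * Real.cos θ :=
          mul_le_mul_of_nonneg_right hcase'.le hcosθ0.le
        have hc2 : (7 * Real.sqrt 2 * π) * (Real.sqrt 2 / 2) ≤ (7 * Real.sqrt 2 * π) * Real.cos θ :=
          mul_le_mul_of_nonneg_left hcosθ (by positivity)
        have hc3 : (7 * Real.sqrt 2 * π) * (Real.sqrt 2 / 2) = 7 * π := by
          rw [show (7 * Real.sqrt 2 * π) * (Real.sqrt 2 / 2)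
            = 7 * π * (Real.sqrt 2 * Real.sqrt 2) / 2 by ring,
            Real.mul_self_sqrt (by norm_num : (0:ℝ) ≤ 2)]
          ring
        have e : 2 * rs * (s * Real.cos θ) = (s * (2*rs)) * Real.cos θ := by ring
        linarith
      clear_value ω
      have hωpos : 0 < ω := by nlinarith [hω7, Real.pi_pos, hrs0]
      have hppos : 0 < 2*π/ω := by positivity
      have hple : 2*π/ω ≤ 4*rs/7 := by
        rw [div_le_div_iff₀ hωpos (by norm_num)]
        linarith
      have hu0 : 0 ≤ rs - 2*π/ω := by linarith
      have hun : rs - 2*π/ω ≤ (⌈(rs - 2*π/ω)/(2*π/ω)⌉₊ : ℝ) * (2*π/ω) := by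
        have h := Nat.le_ceil ((rs - 2*π/ω)/(2*π/ω))
        rw [div_le_iff₀ hppos] at h
        linarith
      have hgi2 : IntervalIntegrable (fun r => r * ρ r * (1 - Real.cos (r * ω))) volume 0 rs :=
        (HIω ω).mono_set (hsub01 le_rfl hrs0.le hrs1)
      have hper := periodize (fun r => r * ρ r) rs ω hωpos (by simp)
        (fun r hr => mul_nonneg hr.1.le (hnonneg r ⟨hr.1, le_trans hr.2 hrs1⟩)) hmono hgi hgi2
        (⌈(rs - 2*π/ω)/(2*π/ω)⌉₊) (rs - 2*π/ω) hu0 hun (by linarith)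
      rw [sub_add_cancel] at hper
      have h37 : (3/7) * rs ≤ rs - 2*π/ω := by linarith
      have hsplitL : L ≤ ∫ r in (0:ℝ)..(rs - 2*π/ω), r * ρ r := by
        have e := intervalIntegral.integral_add_adjacent_intervals
          (hint1.mono_set (hsub01 le_rfl (by linarith) (by linarith)))
          (hint1.mono_set (hsub01 (by linarith) h37 (by linarith)))
        have n0 : 0 ≤ ∫ r in ((3/7) * rs)..(rs - 2*π/ω), r * ρ r := by
          refine intervalIntegral.integral_nonneg h37 fun r hr => ?_
          have hr0 : 0 < r := lt_of_lt_of_le (by linarith) hr.1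
          exact mul_nonneg hr0.le (hnonneg r ⟨hr0, by linarith [hr.2]⟩)
        rw [hLdef]
        linarith
      have hcongr : (∫ r in (0:ℝ)..rs, r * ρ r * (1 - Real.cos (r * δ * κ * Real.cos θ)))
          = ∫ r in (0:ℝ)..rs, r * ρ r * (1 - Real.cos (r * ω)) := by
        refine intervalIntegral.integral_congr fun x _ => ?_
        have hxx : x * δ * κ * Real.cos θ = x * ω := by rw [hωdef, hsdef]; ring
        rw [hxx]
      have hF := hFsplit θ
      rw [hcongr] at hF
      linarith [hper, hsplitL, hF]
    have hfinal := hwindow 0 (π/4) L le_rfl (by positivity) (by linarith [Real.pi_pos]) hLF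
    refine le_trans (le_trans (min_le_right _ _) (min_le_right _ _)) ?_
    linarith
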